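/- Let h : ℂ³ → ℂ be defined by h(v, ξ, ζ) = (v + v̄ − ζ·ξ̄ − ζ̄·ξ)/(1 + |ζ|²) (this is the function on the twistor family of ℝ⁴ induced by h₀(x₁,x₂,x₃,x₄) = 2x₁ via the twistor coordinates v = z + ζw̄, ξ = w − ζz̄ with z = x₁+ix₂, w = x₃+ix₄). Then for all v, ξ ∈ ℂ, the reduction ∫_ℂ h(v, ξ, ζ) · (π(1 + |ζ|²)²)^{−1} dμ(ζ) = Re(v), where dμ is Lebesgue measure on ℂ. -/

import Mathlib

open MeasureTheory Complex

noncomputable section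

/-- The function on the twistor family of `ℝ⁴` induced by `h₀(x₁,x₂,x₃,x₄) = 2x₁ = z + z̄`:
`h(v,ξ,ζ) = (v + v̄ − ζξ̄ − ζ̄ξ)/(1+|ζ|²)`. -/
def hTw : ℂ × ℂ × ℂ → ℂ := fun p =>
  (p.1 + (starRingEnd ℂ) p.1 - p.2.2 * (starRingEnd ℂ) p.2.1 -
      (starRingEnd ℂ) p.2.2 * p.2.1) / ((1 + Complex.normSq p.2.2 : ℝ) : ℂ)

/-- `∫_{0}^{∞} y (1+y²)⁻³ dy = 1/4`. -/
lemma aux_Ioi_integral : ∫ y in Set.Ioi (0 : ℝ), y * ((1 + y ^ 2) ^ 3)⁻¹ = 1 / 4 := by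
  have hpos : ∀ y : ℝ, (0 : ℝ) < 1 + y ^ 2 := fun y => by positivity
  have hderiv : ∀ y ∈ Set.Ici (0 : ℝ),
      HasDerivAt (fun y : ℝ => -(1 / 4) * ((1 + y ^ 2) ^ 2)⁻¹)
        (y * ((1 + y ^ 2) ^ 3)⁻¹) y := by
    intro y _
    have h1 : HasDerivAt (fun y : ℝ => 1 + y ^ 2) (2 * y) y := by
      simpa using ((hasDerivAt_pow 2 y).const_add 1)
    have h2 : HasDerivAt (fun y : ℝ => (1 + y ^ 2) ^ 2) (2 * (1 + y ^ 2) * (2 * y)) y := by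
      simpa [mul_comm, mul_assoc, mul_left_comm] using
        (h1.fun_pow 2)
    have h3 : HasDerivAt (fun y : ℝ => ((1 + y ^ 2) ^ 2)⁻¹)
        (-(2 * (1 + y ^ 2) * (2 * y)) / ((1 + y ^ 2) ^ 2) ^ 2) y :=
      h2.inv (by positivity)
    have := h3.const_mul (-(1 / 4) : ℝ)
    refine this.congr_deriv ?_
    have hne : (1 + y ^ 2) ≠ 0 := (hpos y).ne'
    field_simp
    ring
  have hint : IntegrableOn (fun y : ℝ => y * ((1 + y ^ 2) ^ 3)⁻¹) (Set.Ioi (0 : ℝ)) := by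
    refine (integrable_inv_one_add_sq.restrict (s := Set.Ioi (0:ℝ))).mono' ?_ ?_
    · refine (Continuous.aestronglyMeasurable ?_)
      exact continuous_id.mul (((continuous_const.add (continuous_pow 2)).pow 3).inv₀
        (fun y => (pow_pos (hpos y) 3).ne'))
    · filter_upwards [ae_restrict_mem measurableSet_Ioi] with y hy
      have h1 : (0:ℝ) < 1 + y ^ 2 := hpos y
      have hnn : ‖y * ((1 + y ^ 2) ^ 3)⁻¹‖ = y * ((1 + y ^ 2) ^ 3)⁻¹ :=
        Real.norm_of_nonneg (mul_nonneg (le_of_lt hy) (by positivity))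
      rw [hnn]
      rw [← div_eq_mul_inv, div_le_iff₀ (by positivity)]
      have : y ≤ (1 + y ^ 2) ^ 2 := by nlinarith [sq_nonneg y, sq_nonneg (y - 1), sq_nonneg (y*y)]
      calc y ≤ (1 + y ^ 2) ^ 2 := this
        _ = (1 + y ^ 2)⁻¹ * (1 + y ^ 2) ^ 3 := by
          field_simp
  have htend : Filter.Tendsto (fun y : ℝ => -(1 / 4) * ((1 + y ^ 2) ^ 2)⁻¹)
      Filter.atTop (nhds 0) := by
    have h0 : Filter.Tendsto (fun y : ℝ => (1 + y ^ 2) ^ 2) Filter.atTop Filter.atTop := by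
      have h1 : Filter.Tendsto (fun y : ℝ => 1 + y ^ 2) Filter.atTop Filter.atTop :=
        Filter.tendsto_atTop_add_const_left _ 1
          (Filter.tendsto_pow_atTop (two_ne_zero))
      exact (Filter.tendsto_pow_atTop (two_ne_zero)).comp h1
    have h2 : Filter.Tendsto (fun y : ℝ => ((1 + y ^ 2) ^ 2)⁻¹) Filter.atTop (nhds 0) :=
      Filter.Tendsto.inv_tendsto_atTop h0
    have h3 := h2.const_mul (-(1 / 4) : ℝ)
    simpa using h3
  have := integral_Ioi_of_hasDerivAt_of_tendsto' hderiv hint htend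
  rw [this]
  norm_num

/-- The reduction in `ζ` of the twistor symbol of `2x₁` is `Re v`:
`∫_ℂ h(v,ξ,ζ) (π(1+|ζ|²)²)⁻¹ dμ(ζ) = Re v` for all `v, ξ ∈ ℂ`. -/
theorem reduction_of_two_x1 (v ξ : ℂ) :
    ∫ ζ : ℂ, hTw (v, ξ, ζ) * ((Real.pi * (1 + Complex.normSq ζ) ^ 2 : ℝ) : ℂ)⁻¹
      = ((v.re : ℝ) : ℂ) := by
  have hπ : (0 : ℝ) < Real.pi := Real.pi_pos
  set f : ℂ → ℂ := fun ζ =>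
    hTw (v, ξ, ζ) * ((Real.pi * (1 + Complex.normSq ζ) ^ 2 : ℝ) : ℂ)⁻¹ with hf
  -- measurability
  have hmeas : AEStronglyMeasurable f volume := by
    apply Continuous.aestronglyMeasurable
    have hden : Continuous fun ζ : ℂ => ((1 + Complex.normSq ζ : ℝ) : ℂ) :=
      Complex.continuous_ofReal.comp (continuous_const.add Complex.continuous_normSq)
    have hnum : Continuous fun ζ : ℂ =>
        v + (starRingEnd ℂ) v - ζ * (starRingEnd ℂ) ξ - (starRingEnd ℂ) ζ * ξ :=
      (continuous_const.sub (continuous_id.mul continuous_const)).sub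
        (Complex.continuous_conj.mul continuous_const)
    have h2 : Continuous fun ζ : ℂ =>
        ((Real.pi * (1 + Complex.normSq ζ) ^ 2 : ℝ) : ℂ)⁻¹ := by
      apply Continuous.inv₀
      · exact Complex.continuous_ofReal.comp
          (continuous_const.mul ((continuous_const.add Complex.continuous_normSq).pow 2))
      · intro ζ
        rw [Complex.ofReal_ne_zero]
        have := Complex.normSq_nonneg ζ
        positivity
    exact (hnum.div hden fun ζ => by
      rw [Complex.ofReal_ne_zero]
      exact (add_pos_of_pos_of_nonneg one_pos (Complex.normSq_nonneg ζ)).ne').mul h2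
  -- integrability
  have hbound : ∀ ζ : ℂ, ‖f ζ‖ ≤
      ((2 * ‖v‖ + 2 * ‖ξ‖) / Real.pi) * ((1 + ‖ζ‖ ^ 2) ^ 2)⁻¹ := by
    intro ζ
    have hs0 : (0 : ℝ) ≤ Complex.normSq ζ := Complex.normSq_nonneg ζ
    have hs1 : (0 : ℝ) < 1 + Complex.normSq ζ := by positivity
    have hsq : Complex.normSq ζ = ‖ζ‖ ^ 2 := by
      rw [Complex.normSq_eq_norm_sq]
    have hnum : ‖v + (starRingEnd ℂ) v - ζ * (starRingEnd ℂ) ξ - (starRingEnd ℂ) ζ * ξ‖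
        ≤ 2 * ‖v‖ + 2 * (‖ζ‖ * ‖ξ‖) := by
      calc ‖v + (starRingEnd ℂ) v - ζ * (starRingEnd ℂ) ξ - (starRingEnd ℂ) ζ * ξ‖
          ≤ ‖v + (starRingEnd ℂ) v - ζ * (starRingEnd ℂ) ξ‖ + ‖(starRingEnd ℂ) ζ * ξ‖ :=
            norm_sub_le _ _
        _ ≤ (‖v + (starRingEnd ℂ) v‖ + ‖ζ * (starRingEnd ℂ) ξ‖) + ‖(starRingEnd ℂ) ζ * ξ‖ := by
            gcongr; exact norm_sub_le _ _
        _ ≤ ((‖v‖ + ‖(starRingEnd ℂ) v‖) + ‖ζ * (starRingEnd ℂ) ξ‖) + ‖(starRingEnd ℂ) ζ * ξ‖ := by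
            gcongr; exact norm_add_le _ _
        _ = 2 * ‖v‖ + 2 * (‖ζ‖ * ‖ξ‖) := by
            simp [norm_mul]; ring
    have hz : ‖ζ‖ ≤ 1 + ‖ζ‖ ^ 2 := by nlinarith [sq_nonneg (‖ζ‖ - 1)]
    have hfval : ‖f ζ‖ =
        ‖v + (starRingEnd ℂ) v - ζ * (starRingEnd ℂ) ξ - (starRingEnd ℂ) ζ * ξ‖
          / (1 + Complex.normSq ζ) * (Real.pi * (1 + Complex.normSq ζ) ^ 2)⁻¹ := by
      rw [hf]
      simp only [hTw, norm_mul, norm_div, norm_inv, Complex.norm_real]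
      rw [Real.norm_of_nonneg hs1.le, Real.norm_of_nonneg hπ.le,
        Real.norm_of_nonneg (pow_nonneg hs1.le 2)]
    rw [hfval, hsq]
    have h2 : ‖v + (starRingEnd ℂ) v - ζ * (starRingEnd ℂ) ξ - (starRingEnd ℂ) ζ * ξ‖
        / (1 + ‖ζ‖ ^ 2) ≤ 2 * ‖v‖ + 2 * ‖ξ‖ := by
      rw [div_le_iff₀ (by positivity)]
      calc ‖v + (starRingEnd ℂ) v - ζ * (starRingEnd ℂ) ξ - (starRingEnd ℂ) ζ * ξ‖
          ≤ 2 * ‖v‖ + 2 * (‖ζ‖ * ‖ξ‖) := hnum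
        _ ≤ (2 * ‖v‖ + 2 * ‖ξ‖) * (1 + ‖ζ‖ ^ 2) := by
            have h4 : 2 * (‖ζ‖ * ‖ξ‖) ≤ 2 * ‖ξ‖ * (1 + ‖ζ‖ ^ 2) := by
              have := mul_le_mul_of_nonneg_left hz (by positivity : (0:ℝ) ≤ 2 * ‖ξ‖)
              nlinarith [norm_nonneg ξ]
            nlinarith [norm_nonneg v, norm_nonneg ζ, sq_nonneg ‖ζ‖]
    calc ‖v + (starRingEnd ℂ) v - ζ * (starRingEnd ℂ) ξ - (starRingEnd ℂ) ζ * ξ‖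
          / (1 + ‖ζ‖ ^ 2) * (Real.pi * (1 + ‖ζ‖ ^ 2) ^ 2)⁻¹
        ≤ (2 * ‖v‖ + 2 * ‖ξ‖) * (Real.pi * (1 + ‖ζ‖ ^ 2) ^ 2)⁻¹ := by
          gcongr
      _ = ((2 * ‖v‖ + 2 * ‖ξ‖) / Real.pi) * ((1 + ‖ζ‖ ^ 2) ^ 2)⁻¹ := by
          rw [mul_inv]
          ring
  have hgint : Integrable (fun ζ : ℂ => ((1 + ‖ζ‖ ^ 2) ^ 2)⁻¹) (volume : Measure ℂ) := by
    have h4 : (Module.finrank ℝ ℂ : ℝ) < 4 := by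
      rw [Complex.finrank_real_complex]; norm_num
    have := integrable_rpow_neg_one_add_norm_sq (E := ℂ) (μ := volume) h4
    refine this.congr (Filter.Eventually.of_forall fun ζ => ?_)
    have h1 : (0 : ℝ) < 1 + ‖ζ‖ ^ 2 := by positivity
    simp only [show (-4 / 2 : ℝ) = -((2 : ℕ) : ℝ) by norm_num, Real.rpow_neg h1.le,
      Real.rpow_natCast]
  have hint : Integrable f := by
    exact (hgint.const_mul ((2 * ‖v‖ + 2 * ‖ξ‖) / Real.pi)).mono' hmeas
      (Filter.Eventually.of_forall fun ζ => hbound ζ)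
  have hnegInt : Integrable (fun ζ => f (-ζ)) :=
    ((Measure.measurePreserving_neg (volume : Measure ℂ)).integrable_comp
      hmeas).mpr hint
  -- pointwise symmetrization
  have hpt : (fun ζ : ℂ => f ζ + f (-ζ)) = fun ζ : ℂ =>
      (v + (starRingEnd ℂ) v) *
        ((2 * (Real.pi * (1 + Complex.normSq ζ) ^ 3)⁻¹ : ℝ) : ℂ) := by
    funext ζ
    have hs : Complex.normSq (-ζ) = Complex.normSq ζ := by simp
    have h1 : ((1 : ℝ) + Complex.normSq ζ) ≠ 0 :=
      (add_pos_of_pos_of_nonneg one_pos (Complex.normSq_nonneg ζ)).ne'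
    have h1' : ((1 + Complex.normSq ζ : ℝ) : ℂ) ≠ 0 := by
      rw [Complex.ofReal_ne_zero]; exact h1
    have hπ' : (Real.pi : ℂ) ≠ 0 := by exact_mod_cast Real.pi_ne_zero
    simp only [hf, hTw, hs, map_neg, neg_mul, mul_neg]
    push_cast
    field_simp
    ring
  -- the doubled integral
  have hdouble : (∫ ζ, f ζ) + (∫ ζ, f ζ) =
      (v + (starRingEnd ℂ) v) *
        ((∫ ζ : ℂ, 2 * (Real.pi * (1 + Complex.normSq ζ) ^ 3)⁻¹ : ℝ) : ℂ) := by
    nth_rewrite 2 [← integral_neg_eq_self f (volume : Measure ℂ)]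
    rw [← integral_add hint hnegInt]
    rw [show (fun ζ : ℂ => f ζ + f (-ζ)) = _ from hpt]
    rw [integral_const_mul]
    congr 1
    exact integral_ofReal (𝕜 := ℂ)
  -- computing the real radial integral
  have hreal : (∫ ζ : ℂ, 2 * (Real.pi * (1 + Complex.normSq ζ) ^ 3)⁻¹ : ℝ) = 1 := by
    have hsq : ∀ ζ : ℂ, Complex.normSq ζ = ‖ζ‖ ^ 2 := fun ζ => by
      rw [Complex.normSq_eq_norm_sq]
    simp_rw [hsq]
    have := MeasureTheory.integral_fun_norm_addHaar (volume : Measure ℂ)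
      (fun y : ℝ => 2 * (Real.pi * (1 + y ^ 2) ^ 3)⁻¹)
    rw [this]
    have hball : (volume (Metric.ball (0 : ℂ) 1)).toReal = Real.pi := by
      rw [Complex.volume_ball]
      simp [ENNReal.toReal_mul, ENNReal.toReal_pow, ENNReal.toReal_ofReal zero_le_one]
    rw [Complex.finrank_real_complex, measureReal_def, hball]
    have hy : ∀ y : ℝ, y ^ (2 - 1) • (2 * (Real.pi * (1 + y ^ 2) ^ 3)⁻¹)
        = (2 / Real.pi) * (y * ((1 + y ^ 2) ^ 3)⁻¹) := by
      intro y
      have h1 : ((1 : ℝ) + y ^ 2) ^ 3 ≠ 0 := by positivity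
      simp only [pow_one, smul_eq_mul]
      field_simp
      ring
    simp_rw [hy]
    rw [MeasureTheory.integral_const_mul, aux_Ioi_integral, smul_eq_mul, nsmul_eq_mul]
    field_simp
    ring
  rw [hreal] at hdouble
  have hconj : v + (starRingEnd ℂ) v = ((2 * v.re : ℝ) : ℂ) := Complex.add_conj v
  rw [hconj] at hdouble
  have h2 : (2 : ℂ) * (∫ ζ, f ζ) = (2 : ℂ) * ((v.re : ℝ) : ℂ) := by
    rw [two_mul, hdouble]
    push_cast
    ring
  exact mul_left_cancel₀ (two_ne_zero) h2
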